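/- Let u be a partial injection which is the union of a family of pairwise strongly disjoint forward links λᵢ (i ∈ I), and let λ be any one of these links. Then the inverse semigroup [u] generated by u (inside the symmetric inverse semigroup of partial bijections under composition) is isomorphic to the inverse semigroup [λ] generated by λ. -/

import Mathlib

/-- The symmetric inverse semigroup: partial bijections of `X` under composition. -/
instance PEquiv.instSemigroup {X : Type} : Semigroup (PEquiv X X) where
  mul f g := f.trans g
  mul_assoc f g h := by
    apply PEquiv.ext
    intro x
    show ((f.trans g).trans h) x = (f.trans (g.trans h)) x
    simp [PEquiv.trans]
    cases f x <;> simp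

/-- The inverse subsemigroup `[u]` of the symmetric inverse semigroup generated by a
partial bijection `u`: the smallest subsemigroup containing `u` and closed under
taking inverse partial bijections. -/
def invClosure {X : Type} (u : PEquiv X X) : Subsemigroup (PEquiv X X) :=
  sInf {T : Subsemigroup (PEquiv X X) | u ∈ T ∧ ∀ f ∈ T, f.symm ∈ T}

/-- A forward link: the partial injection `aᵢ ↦ aᵢ₊₁` on a countably infinite
sequence of distinct elements `a₀, a₁, a₂, …`, undefined elsewhere. -/
def IsForwardLink {X : Type} (f : PEquiv X X) : Prop :=
  ∃ a : ℕ → X, Function.Injective a ∧ (∀ i : ℕ, f (a i) = some (a (i + 1))) ∧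
    (∀ x : X, (∀ i : ℕ, x ≠ a i) → f x = none)

/-- Two partial bijections `λ : A → B` and `μ : C → D` are strongly disjoint if
`A ∩ C = A ∩ D = B ∩ C = B ∩ D = ∅`, i.e. `(A ∪ B) ∩ (C ∪ D) = ∅`. -/
def StronglyDisjoint {X : Type} (f g : PEquiv X X) : Prop :=
  ∀ x : X, (f x ≠ none ∨ f.symm x ≠ none) → (g x = none ∧ g.symm x = none)

/-! ### Auxiliary: the bicyclic semigroup -/

structure Bic where
  m : ℕ
  n : ℕ

instance : Mul Bic := ⟨fun a b => ⟨a.m + (b.m - a.n), b.n + (a.n - b.m)⟩⟩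

lemma Bic.mul_def (a b : Bic) : a * b = ⟨a.m + (b.m - a.n), b.n + (a.n - b.m)⟩ := rfl

instance : Semigroup Bic where
  mul_assoc a b c := by
    simp only [Bic.mul_def, Bic.mk.injEq]
    omega

lemma opt_ext {X : Type} {o o' : Option X} (h : ∀ y, o = some y ↔ o' = some y) : o = o' := by
  cases o with
  | none =>
    cases o' with
    | none => rfl
    | some v => exact nomatch ((h v).2 rfl)
  | some v => exact ((h v).1 rfl).symm

open Classical in
/-- The partial bijection `a i t ↦ a i (t - m + n)` defined for `t ≥ m`. -/
noncomputable def phiFun {X I : Type} (a : I → ℕ → X) (m n : ℕ) (x : X) : Option X :=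
  if h : ∃ p : I × ℕ, m ≤ p.2 ∧ a p.1 p.2 = x then
    some (a h.choose.1 (h.choose.2 - m + n)) else none

lemma phiFun_eq_some_iff {X I : Type} {a : I → ℕ → X}
    (hg : ∀ i i' s s', a i s = a i' s' → i = i' ∧ s = s') (m n : ℕ) (x y : X) :
    phiFun a m n x = some y ↔ ∃ i t, x = a i t ∧ m ≤ t ∧ y = a i (t - m + n) := by
  unfold phiFun
  split
  next h =>
    obtain ⟨h1, h2⟩ := h.choose_spec
    simp only [Option.some.injEq]
    constructor
    · rintro rfl
      exact ⟨h.choose.1, h.choose.2, h2.symm, h1, rfl⟩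
    · rintro ⟨i, t, rfl, hmt, rfl⟩
      obtain ⟨hi, ht⟩ := hg _ _ _ _ h2
      rw [hi, ht]
  next h =>
    constructor
    · intro hc; exact nomatch hc
    · rintro ⟨i, t, rfl, hmt, rfl⟩
      exact absurd ⟨(i, t), hmt, rfl⟩ h

noncomputable def phi {X I : Type} (a : I → ℕ → X)
    (hg : ∀ i i' s s', a i s = a i' s' → i = i' ∧ s = s') (m n : ℕ) : PEquiv X X where
  toFun := phiFun a m n
  invFun := phiFun a n m
  inv := by
    intro x y
    rw [phiFun_eq_some_iff hg, phiFun_eq_some_iff hg]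
    constructor
    · rintro ⟨i, t, rfl, hnt, rfl⟩
      refine ⟨i, t - n + m, rfl, by omega, ?_⟩
      rw [show t - n + m - m + n = t by omega]
    · rintro ⟨i, t, rfl, hmt, rfl⟩
      refine ⟨i, t - m + n, rfl, by omega, ?_⟩
      rw [show t - m + n - n + m = t by omega]

lemma phi_eq_some_iff {X I : Type} {a : I → ℕ → X}
    (hg : ∀ i i' s s', a i s = a i' s' → i = i' ∧ s = s') (m n : ℕ) (x y : X) :
    phi a hg m n x = some y ↔ ∃ i t, x = a i t ∧ m ≤ t ∧ y = a i (t - m + n) :=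
  phiFun_eq_some_iff hg m n x y

lemma phi_symm {X I : Type} {a : I → ℕ → X}
    (hg : ∀ i i' s s', a i s = a i' s' → i = i' ∧ s = s') (m n : ℕ) :
    (phi a hg m n).symm = phi a hg n m := rfl

lemma phi_trans {X I : Type} {a : I → ℕ → X}
    (hg : ∀ i i' s s', a i s = a i' s' → i = i' ∧ s = s') (m n m' n' : ℕ) :
    (phi a hg m n).trans (phi a hg m' n') = phi a hg (m + (m' - n)) (n' + (n - m')) := by
  apply PEquiv.ext
  intro x
  apply opt_ext
  intro y
  rw [PEquiv.trans_eq_some]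
  simp only [phi_eq_some_iff hg]
  constructor
  · rintro ⟨b, ⟨i, t, rfl, h1, rfl⟩, ⟨i', t', hb, h2, rfl⟩⟩
    obtain ⟨rfl, rfl⟩ := hg _ _ _ _ hb
    refine ⟨i, t, rfl, by omega, ?_⟩
    rw [show t - (m + (m' - n)) + (n' + (n - m')) = t - m + n - m' + n' by omega]
  · rintro ⟨i, t, rfl, h1, rfl⟩
    refine ⟨a i (t - m + n), ⟨i, t, rfl, by omega, rfl⟩, ⟨i, t - m + n, rfl, by omega, ?_⟩⟩
    rw [show t - m + n - m' + n' = t - (m + (m' - n)) + (n' + (n - m')) by omega]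

lemma phi_inj {X I : Type} {a : I → ℕ → X}
    (hg : ∀ i i' s s', a i s = a i' s' → i = i' ∧ s = s') (i₀ : I) {m n m' n' : ℕ}
    (h : phi a hg m n = phi a hg m' n') : m = m' ∧ n = n' := by
  have H : ∀ p q p' q', phi a hg p q = phi a hg p' q' → p' ≤ p := by
    intro p q p' q' hpq
    have h1 : phi a hg p' q' (a i₀ p) = some (a i₀ (p - p + q)) := by
      rw [← hpq, phi_eq_some_iff hg]; exact ⟨i₀, p, rfl, le_refl p, rfl⟩
    rw [phi_eq_some_iff hg] at h1
    obtain ⟨i, t, ht, h2, -⟩ := h1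
    obtain ⟨-, rfl⟩ := hg _ _ _ _ ht
    exact h2
  have hm : m = m' := le_antisymm (H m' n' m n h.symm) (H m n m' n' h)
  subst hm
  refine ⟨rfl, ?_⟩
  have h1 : phi a hg m n' (a i₀ m) = some (a i₀ (m - m + n)) := by
    rw [← h, phi_eq_some_iff hg]; exact ⟨i₀, m, rfl, le_refl m, rfl⟩
  rw [phi_eq_some_iff hg] at h1
  obtain ⟨i, t, ht, h2, h3⟩ := h1
  obtain ⟨rfl, rfl⟩ := hg _ _ _ _ ht
  have := (hg _ _ _ _ h3).2
  omega

theorem aux_bic_equiv {X I : Type} [Nonempty I] (l : I → PEquiv X X)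
    (hlinks : ∀ i : I, IsForwardLink (l i))
    (hdisj : ∀ i j : I, i ≠ j → StronglyDisjoint (l i) (l j))
    (u : PEquiv X X)
    (hu : ∀ x y : X, u x = some y ↔ ∃ i : I, l i x = some y) :
    Nonempty (Bic ≃* ↥(invClosure u)) := by
  classical
  choose a hinj hfwd hnone using hlinks
  have hg : ∀ i i' s s', a i s = a i' s' → i = i' ∧ s = s' := by
    intro i i' s s' h
    by_cases hii : i = i'
    · subst hii; exact ⟨rfl, hinj i h⟩
    · exfalso
      have h1 : l i (a i s) ≠ none := by rw [hfwd]; simp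
      have h2 := (hdisj i i' hii (a i s) (Or.inl h1)).1
      rw [h, hfwd] at h2
      exact nomatch h2
  have hu2 : u = phi a hg 0 1 := by
    apply PEquiv.ext
    intro x
    apply opt_ext
    intro y
    rw [hu, phi_eq_some_iff hg]
    constructor
    · rintro ⟨i, hi⟩
      by_cases hx : ∀ t : ℕ, x ≠ a i t
      · rw [hnone i x hx] at hi; exact nomatch hi
      · push_neg at hx
        obtain ⟨t, rfl⟩ := hx
        rw [hfwd i t] at hi
        exact ⟨i, t, rfl, Nat.zero_le t, (Option.some_injective _ hi).symm⟩
    · rintro ⟨i, t, rfl, -, rfl⟩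
      exact ⟨i, hfwd i t⟩
  have hmul : ∀ f g : PEquiv X X, f * g = f.trans g := fun _ _ => rfl
  have step : ∀ m n m' n', phi a hg m n * phi a hg m' n'
      = phi a hg (m + (m' - n)) (n' + (n - m')) :=
    fun m n m' n' => (hmul _ _).trans (phi_trans hg m n m' n')
  have memu : u ∈ invClosure u := Subsemigroup.mem_sInf.2 fun T hT => hT.1
  have memsymm : ∀ f, f ∈ invClosure u → f.symm ∈ invClosure u := fun f hf =>
    Subsemigroup.mem_sInf.2 fun T hT => hT.2 f (Subsemigroup.mem_sInf.1 hf T hT)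
  have mem01 : phi a hg 0 1 ∈ invClosure u := hu2 ▸ memu
  have mem10 : phi a hg 1 0 ∈ invClosure u := by
    have h := memsymm _ mem01
    rwa [phi_symm] at h
  have mem00 : phi a hg 0 0 ∈ invClosure u := by
    have h := (invClosure u).mul_mem mem01 mem10
    rw [step, show (0 + (1 - 1) : ℕ) = 0 by omega] at h
    exact h
  have memrow : ∀ n, phi a hg 0 n ∈ invClosure u := by
    intro n
    induction n with
    | zero => exact mem00
    | succ k ih =>
      have h := (invClosure u).mul_mem ih mem01
      rw [step, show (0 + (0 - k) : ℕ) = 0 by omega,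
        show (1 + (k - 0) : ℕ) = k + 1 by omega] at h
      exact h
  have memphi : ∀ m n, phi a hg m n ∈ invClosure u := by
    intro m
    induction m with
    | zero => exact memrow
    | succ k ih =>
      intro n
      have h := (invClosure u).mul_mem mem10 (ih n)
      rw [step, show (1 + (k - 0) : ℕ) = k + 1 by omega,
        show (n + (0 - k) : ℕ) = n by omega] at h
      exact h
  let T : Subsemigroup (PEquiv X X) :=
    { carrier := {f | ∃ m n, phi a hg m n = f}
      mul_mem' := by
        rintro f g ⟨m, n, rfl⟩ ⟨m', n', rfl⟩
        exact ⟨_, _, (step m n m' n').symm⟩ }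
  have hle : invClosure u ≤ T := sInf_le ⟨⟨0, 1, hu2.symm⟩, by
    rintro f ⟨m, n, rfl⟩
    exact ⟨n, m, (phi_symm hg m n).symm⟩⟩
  obtain ⟨i₀⟩ := ‹Nonempty I›
  let F : Bic →ₙ* ↥(invClosure u) :=
    { toFun := fun b => ⟨phi a hg b.m b.n, memphi b.m b.n⟩
      map_mul' := by
        intro b c
        apply Subtype.ext
        show phi a hg (b * c).m (b * c).n = phi a hg b.m b.n * phi a hg c.m c.n
        rw [step]
        rfl }
  have hbij : Function.Bijective F := by
    constructor
    · intro b c hbc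
      obtain ⟨bm, bn⟩ := b
      obtain ⟨cm, cn⟩ := c
      obtain ⟨h1, h2⟩ := phi_inj hg i₀ (Subtype.ext_iff.1 hbc)
      exact congrArg₂ Bic.mk h1 h2
    · rintro ⟨f, hf⟩
      obtain ⟨m, n, rfl⟩ := hle hf
      exact ⟨⟨m, n⟩, rfl⟩
  exact ⟨MulEquiv.ofBijective F hbij⟩

/-- If `u` is the union of a family of pairwise strongly disjoint forward links
`λᵢ` and `λ` is any one of these links, then the inverse semigroup `[u]` generated
by `u` is isomorphic to the inverse semigroup `[λ]` generated by `λ`. -/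
theorem invClosure_union_of_forwardLinks_mulEquiv {X I : Type} (l : I → PEquiv X X)
    (hlinks : ∀ i : I, IsForwardLink (l i))
    (hdisj : ∀ i j : I, i ≠ j → StronglyDisjoint (l i) (l j))
    (u : PEquiv X X)
    (hu : ∀ x y : X, u x = some y ↔ ∃ i : I, l i x = some y)
    (j : I) :
    Nonempty (↥(invClosure u) ≃* ↥(invClosure (l j))) := by
  haveI : Nonempty I := ⟨j⟩
  obtain ⟨e1⟩ := aux_bic_equiv l hlinks hdisj u hu
  obtain ⟨e2⟩ := aux_bic_equiv (fun _ : Unit => l j) (fun _ => hlinks j)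
    (fun i i' h => absurd (Subsingleton.elim i i') h)
    (l j) (fun x y => ⟨fun h => ⟨(), h⟩, fun ⟨_, h⟩ => h⟩)
  exact ⟨e1.symm.trans e2⟩
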